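/- Let S, A be finite sets, π, π' : S → (probability distributions on A) two policies, and ρ a probability distribution on S with support S̄ and minimum mass ν > 0 on S̄. If Σ_{s,a} |π(a|s)ρ(s) − π'(a|s)ρ'(s)| ≤ 2ε and Σ_s |ρ(s) − ρ'(s)| ≤ 2ε for some occupancy ρ' of π', then for every s ∈ S̄, Σ_a |π(a|s) − π'(a|s)| ≤ 4ε/ν. -/
import Mathlib


/-- Closeness of state-action occupancies and of state occupancies implies uniform per-state
closeness of the conditional policies on the support of `ρ`: if the joint occupancies are
`2ε`-close in ℓ¹ and the state marginals are `2ε`-close in ℓ¹, then for every state `s` in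
the support of `ρ` (with minimum mass `ν > 0`), `∑_a |π(a|s) − π'(a|s)| ≤ 4ε/ν`. -/
theorem policy_close_on_support {S A : Type*} [Fintype S] [Fintype A]
    (π π' : S → A → ℝ)
    (hπ0 : ∀ s a, 0 ≤ π s a) (hπ'0 : ∀ s a, 0 ≤ π' s a)
    (hπ1 : ∀ s, ∑ a : A, π s a = 1) (hπ'1 : ∀ s, ∑ a : A, π' s a = 1)
    (ρ ρ' : S → ℝ)
    (hρ0 : ∀ s, 0 ≤ ρ s) (hρ'0 : ∀ s, 0 ≤ ρ' s)
    (ν ε : ℝ) (hν : 0 < ν) (hε : 0 ≤ ε)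
    (hmin : ∀ s, ρ s ≠ 0 → ν ≤ ρ s)
    (hjoint : ∑ s : S, ∑ a : A, |π s a * ρ s - π' s a * ρ' s| ≤ 2 * ε)
    (hmarg : ∑ s : S, |ρ s - ρ' s| ≤ 2 * ε) :
    ∀ s : S, ρ s ≠ 0 → ∑ a : A, |π s a - π' s a| ≤ 4 * ε / ν := by
  intro s hs
  have hνs : ν ≤ ρ s := hmin s hs
  have hρs : 0 < ρ s := lt_of_lt_of_le hν hνs
  -- single-state bounds from the global sums
  have hj : ∑ a : A, |π s a * ρ s - π' s a * ρ' s| ≤ 2 * ε := by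
    have h2 : (∑ a : A, |π s a * ρ s - π' s a * ρ' s|) ≤
        ∑ t : S, ∑ a : A, |π t a * ρ t - π' t a * ρ' t| :=
      Finset.single_le_sum (f := fun t : S => ∑ a : A, |π t a * ρ t - π' t a * ρ' t|)
        (fun t _ => by positivity) (Finset.mem_univ s)
    exact le_trans h2 hjoint
  have hm : |ρ s - ρ' s| ≤ 2 * ε := by
    have h2 : |ρ s - ρ' s| ≤ ∑ t : S, |ρ t - ρ' t| :=
      Finset.single_le_sum (f := fun t : S => |ρ t - ρ' t|)
        (fun t _ => abs_nonneg _) (Finset.mem_univ s)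
    exact le_trans h2 hmarg
  have key : ρ s * ∑ a : A, |π s a - π' s a| ≤ 4 * ε := by
    rw [Finset.mul_sum]
    have hstep : ∀ a : A, ρ s * |π s a - π' s a| ≤
        |π s a * ρ s - π' s a * ρ' s| + π' s a * |ρ' s - ρ s| := by
      intro a
      have : ρ s * |π s a - π' s a| = |π s a * ρ s - π' s a * ρ s| := by
        rw [show π s a * ρ s - π' s a * ρ s = (π s a - π' s a) * ρ s from by ring,
          abs_mul, abs_of_pos hρs, mul_comm]
      rw [this]
      have := abs_sub_abs_le_abs_sub (π s a * ρ s - π' s a * ρ' s) (π' s a * ρ s - π' s a * ρ' s)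
      calc |π s a * ρ s - π' s a * ρ s|
          ≤ |π s a * ρ s - π' s a * ρ' s| + |π' s a * ρ' s - π' s a * ρ s| := by
            have := abs_sub_le (π s a * ρ s) (π' s a * ρ' s) (π' s a * ρ s)
            linarith
        _ = |π s a * ρ s - π' s a * ρ' s| + π' s a * |ρ' s - ρ s| := by
            rw [← mul_sub, abs_mul, abs_of_nonneg (hπ'0 s a)]
    calc ∑ a : A, ρ s * |π s a - π' s a|
        ≤ ∑ a : A, (|π s a * ρ s - π' s a * ρ' s| + π' s a * |ρ' s - ρ s|) :=
          Finset.sum_le_sum fun a _ => hstep a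
      _ = (∑ a : A, |π s a * ρ s - π' s a * ρ' s|) + (∑ a : A, π' s a) * |ρ' s - ρ s| := by
          rw [Finset.sum_add_distrib, Finset.sum_mul]
      _ ≤ 2 * ε + 1 * (2 * ε) := by
          rw [hπ'1 s, abs_sub_comm]; exact add_le_add hj (by linarith)
      _ = 4 * ε := by ring
  have hsum_nonneg : 0 ≤ ∑ a : A, |π s a - π' s a| :=
    Finset.sum_nonneg fun a _ => abs_nonneg _
  have h1 : ∑ a : A, |π s a - π' s a| ≤ 4 * ε / ρ s := by
    rw [le_div_iff₀ hρs]; linarith [key]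
  calc ∑ a : A, |π s a - π' s a| ≤ 4 * ε / ρ s := h1
    _ ≤ 4 * ε / ν := by
        apply div_le_div_of_nonneg_left (by linarith) hν hνs
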